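/- The expected area of the SLE_{8/3} bubble with bulk point w is infinite: if p_w(z) = (Im(1/z)/Im(1/w))·G(σ(z,w)) with G(t) = 1 - t·₂F₁(1,4/3;5/3;1-t), then ∫_ℍ p_w(z) dA(z) = ∞. -/

import Mathlib

open Real Filter Set Asymptotics MeasureTheory Complex

/-- The Gauss hypergeometric function `₂F₁(a, b; c; t)`, defined by its power series. -/
noncomputable def hyp (a b c t : ℝ) : ℝ :=
  ∑' n : ℕ, ((ascPochhammer ℝ n).eval a * (ascPochhammer ℝ n).eval b) /
    ((ascPochhammer ℝ n).eval c * (n.factorial : ℝ)) * t ^ n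

/-- `G(t) = 1 - t·₂F₁(1, 4/3; 5/3; 1-t)`. -/
noncomputable def Gfun (t : ℝ) : ℝ := 1 - t * hyp 1 (4/3) (5/3) (1 - t)

/-- `σ(z,w) = |z-w|²/|z - w̄|²`. -/
noncomputable def sigmaC (z w : ℂ) : ℝ :=
  ‖z - w‖ ^ 2 / ‖z - (starRingEnd ℂ) w‖ ^ 2

/-- `p_w(z) = (Im(1/z)/Im(1/w))·G(σ(z,w))`, the probability that `z` lies in the
SLE₈/₃ bubble with bulk point `w`. -/
noncomputable def pbulk (w z : ℂ) : ℝ := ((1 / z).im / (1 / w).im) * Gfun (sigmaC z w)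

/-- Ratio bound for Pochhammer symbols. -/
lemma poch_ratio (n : ℕ) (hn : 1 ≤ n) :
    (ascPochhammer ℝ n).eval (4/3 : ℝ) ≤ 4/5 * (ascPochhammer ℝ n).eval (5/3 : ℝ) := by
  induction n, hn using Nat.le_induction with
  | base => simp [ascPochhammer_one]; norm_num
  | succ n hn ih =>
    rw [ascPochhammer_succ_eval, ascPochhammer_succ_eval]
    have h4 : (0:ℝ) < (ascPochhammer ℝ n).eval (4/3 : ℝ) :=
      ascPochhammer_pos n _ (by norm_num)
    have h5 : (0:ℝ) ≤ (4:ℝ)/3 + n := by positivity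
    calc (ascPochhammer ℝ n).eval (4/3 : ℝ) * ((4:ℝ)/3 + n)
        ≤ (4/5 * (ascPochhammer ℝ n).eval (5/3 : ℝ)) * ((4:ℝ)/3 + n) :=
          mul_le_mul_of_nonneg_right ih h5
      _ ≤ (4/5 * (ascPochhammer ℝ n).eval (5/3 : ℝ)) * ((5:ℝ)/3 + n) := by
          have h5' : (0:ℝ) < (ascPochhammer ℝ n).eval (5/3 : ℝ) :=
            ascPochhammer_pos n _ (by norm_num)
          apply mul_le_mul_of_nonneg_left (by linarith) (by positivity)
      _ = 4/5 * ((ascPochhammer ℝ n).eval (5/3 : ℝ) * ((5:ℝ)/3 + n)) := by ring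

/-- Bound on the hypergeometric function near 0. -/
lemma hyp_le {s : ℝ} (hs0 : 0 ≤ s) (hs1 : s ≤ 1/10) :
    hyp 1 (4/3) (5/3) s ≤ 1 + (8/9) * s := by
  set f : ℕ → ℝ := fun n => ((ascPochhammer ℝ n).eval (1:ℝ) * (ascPochhammer ℝ n).eval (4/3:ℝ)) /
    ((ascPochhammer ℝ n).eval (5/3:ℝ) * (n.factorial : ℝ)) * s ^ n with hf
  set g : ℕ → ℝ := fun n => (4/5) * s ^ n + (if n = 0 then (1/5 : ℝ) else 0) with hg
  have hfnonneg : ∀ n, 0 ≤ f n := by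
    intro n
    have h5 : (0:ℝ) < (ascPochhammer ℝ n).eval (5/3 : ℝ) := ascPochhammer_pos n _ (by norm_num)
    have h4 : (0:ℝ) < (ascPochhammer ℝ n).eval (4/3 : ℝ) := ascPochhammer_pos n _ (by norm_num)
    have h1 : (0:ℝ) < (ascPochhammer ℝ n).eval (1 : ℝ) := ascPochhammer_pos n _ (by norm_num)
    have hfact : (0:ℝ) < (n.factorial : ℝ) := by positivity
    have hp : (0:ℝ) ≤ s ^ n := by positivity
    positivity
  have hfg : ∀ n, f n ≤ g n := by
    intro n
    match n with
    | 0 => simp [hf, hg, ascPochhammer_zero]; norm_num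
    | (m+1) =>
      have h5 : (0:ℝ) < (ascPochhammer ℝ (m+1)).eval (5/3 : ℝ) :=
        ascPochhammer_pos _ _ (by norm_num)
      have hfact : (0:ℝ) < ((m+1).factorial : ℝ) := by
        exact_mod_cast Nat.cast_pos.2 (Nat.factorial_pos _)
      have hratio : (ascPochhammer ℝ (m+1)).eval (4/3 : ℝ) ≤
          4/5 * (ascPochhammer ℝ (m+1)).eval (5/3 : ℝ) := poch_ratio _ (Nat.le_add_left 1 m)
      have hone : (ascPochhammer ℝ (m+1)).eval (1 : ℝ) = ((m+1).factorial : ℝ) :=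
        ascPochhammer_eval_one ℝ (m+1)
      have hppos : (0:ℝ) ≤ s ^ (m+1) := by positivity
      have key : ((ascPochhammer ℝ (m+1)).eval (1:ℝ) * (ascPochhammer ℝ (m+1)).eval (4/3:ℝ)) /
          ((ascPochhammer ℝ (m+1)).eval (5/3:ℝ) * ((m+1).factorial : ℝ)) ≤ 4/5 := by
        rw [hone, div_le_iff₀ (by positivity)]
        calc ((m+1).factorial : ℝ) * (ascPochhammer ℝ (m+1)).eval (4/3:ℝ)
            ≤ ((m+1).factorial : ℝ) * (4/5 * (ascPochhammer ℝ (m+1)).eval (5/3:ℝ)) :=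
              mul_le_mul_of_nonneg_left hratio hfact.le
          _ = 4/5 * ((ascPochhammer ℝ (m+1)).eval (5/3:ℝ) * ((m+1).factorial : ℝ)) := by ring
      simp only [hf, hg, if_neg (Nat.succ_ne_zero m), add_zero]
      exact mul_le_mul_of_nonneg_right key hppos
  have hs1' : s < 1 := lt_of_le_of_lt hs1 (by norm_num)
  have hsum_geo : Summable (fun n : ℕ => (4/5 : ℝ) * s ^ n) :=
    (summable_geometric_of_lt_one hs0 hs1').mul_left _
  have hsum_ite : Summable (fun n : ℕ => (if n = 0 then (1/5 : ℝ) else 0)) := by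
    apply summable_of_ne_finset_zero (s := {0})
    intro n hn
    simp only [Finset.mem_singleton] at hn
    simp [hn]
  have hsumg : Summable g := hsum_geo.add hsum_ite
  have hsumf : Summable f := Summable.of_nonneg_of_le hfnonneg hfg hsumg
  have htsum : hyp 1 (4/3) (5/3) s ≤ ∑' n, g n := by
    unfold hyp
    exact Summable.tsum_le_tsum hfg hsumf hsumg
  have hgval : ∑' n, g n = (4/5) * (1 - s)⁻¹ + 1/5 := by
    have h1 : ∑' n, g n = (∑' n, (4/5 : ℝ) * s ^ n) +
        ∑' n : ℕ, (if n = 0 then (1/5 : ℝ) else 0) := Summable.tsum_add hsum_geo hsum_ite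
    rw [h1, tsum_mul_left, tsum_geometric_of_lt_one hs0 hs1']
    congr 1
    exact tsum_ite_eq (0 : ℕ) (fun _ => (1/5 : ℝ))
  have hfinal : (4/5 : ℝ) * (1 - s)⁻¹ + 1/5 ≤ 1 + (8/9) * s := by
    have h1s : (0:ℝ) < 1 - s := by linarith
    have key : (4/5 : ℝ) * (1 - s)⁻¹ ≤ 4/5 + 8/9 * s := by
      rw [← div_eq_mul_inv, div_le_iff₀ h1s]
      nlinarith
    linarith
  calc hyp 1 (4/3) (5/3) s ≤ ∑' n, g n := htsum
    _ = (4/5) * (1 - s)⁻¹ + 1/5 := hgval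
    _ ≤ 1 + (8/9) * s := hfinal

/-- Lower bound for `G` near 1. -/
lemma Gfun_ge {t : ℝ} (ht0 : 9/10 ≤ t) (ht1 : t ≤ 1) : (1 - t) / 9 ≤ Gfun t := by
  have hs0 : 0 ≤ 1 - t := by linarith
  have hs1 : 1 - t ≤ 1/10 := by linarith
  have hhyp := hyp_le hs0 hs1
  have ht0' : (0:ℝ) ≤ t := by linarith
  have : t * hyp 1 (4/3) (5/3) (1 - t) ≤ t * (1 + 8/9 * (1 - t)) :=
    mul_le_mul_of_nonneg_left hhyp ht0'
  unfold Gfun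
  nlinarith

set_option maxHeartbeats 2000000 in
/-- Pointwise lower bound for `pbulk` on a wedge. -/
lemma pbulk_ge (w : ℂ) (hw : 0 < w.im) (z : ℂ) (h40 : 40 * w.im ≤ z.im)
    (habsw : ‖w‖ ≤ z.im) (hre : |z.re| ≤ z.im) :
    ‖w‖ ^ 2 / 36 / z.im ^ 2 ≤ pbulk w z := by
  obtain ⟨x, y⟩ := z
  obtain ⟨u, v⟩ := w
  simp only [Complex.norm_def] at habsw ⊢
  simp only at hw h40 hre ⊢
  have hy : 0 < y := lt_of_lt_of_le (by linarith) h40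
  have hu : |u| ≤ y := by
    refine le_trans ?_ habsw
    have := Complex.abs_re_le_norm ⟨u, v⟩
    simpa [Complex.norm_def] using this
  have hvy : v ≤ y := by linarith
  -- σ computation
  have hNzw : Complex.normSq (Complex.mk x y - Complex.mk u v) = (x - u)^2 + (y - v)^2 := by
    simp [Complex.normSq_apply, Complex.sub_re, Complex.sub_im]; ring
  have hNzwc : Complex.normSq (Complex.mk x y - (starRingEnd ℂ) (Complex.mk u v)) =
      (x - u)^2 + (y + v)^2 := by
    simp [Complex.normSq_apply, Complex.sub_re, Complex.sub_im, Complex.conj_re,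
      Complex.conj_im]; ring
  have hDpos : 0 < (x - u)^2 + (y + v)^2 := by positivity
  have hsigma : sigmaC (Complex.mk x y) (Complex.mk u v) =
      ((x - u)^2 + (y - v)^2) / ((x - u)^2 + (y + v)^2) := by
    unfold sigmaC
    rw [Complex.sq_norm, Complex.sq_norm, hNzw, hNzwc]
  have hs1 : sigmaC (Complex.mk x y) (Complex.mk u v) ≤ 1 := by
    rw [hsigma, div_le_one hDpos]
    nlinarith
  have honeminus : 1 - sigmaC (Complex.mk x y) (Complex.mk u v) =
      4 * y * v / ((x - u)^2 + (y + v)^2) := by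
    rw [hsigma]
    field_simp
    ring
  have hDge : y^2 ≤ (x - u)^2 + (y + v)^2 := by nlinarith
  have hDle : (x - u)^2 + (y + v)^2 ≤ 8 * y^2 := by
    have h1 : (x - u)^2 ≤ (|x| + |u|)^2 := by
      have h2 : |x - u| ≤ |x| + |u| := abs_sub x u
      nlinarith [abs_nonneg (x - u), _root_.sq_abs (x - u)]
    have h2 : (|x| + |u|)^2 ≤ (2*y)^2 := by nlinarith [abs_nonneg x, abs_nonneg u]
    nlinarith
  have hsm_le : 1 - sigmaC (Complex.mk x y) (Complex.mk u v) ≤ 1/10 := by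
    rw [honeminus]
    have h1 : 4 * y * v / ((x - u)^2 + (y + v)^2) ≤ 4 * y * v / y^2 :=
      div_le_div_of_nonneg_left (by positivity) (by positivity) hDge
    have h2 : 4 * y * v / y^2 = 4 * v / y := by field_simp
    have h3 : 4 * v / y ≤ 1/10 := by
      rw [div_le_iff₀ hy]; linarith
    linarith
  have hsm_ge : v / (2 * y) ≤ 1 - sigmaC (Complex.mk x y) (Complex.mk u v) := by
    rw [honeminus]
    have h1 : 4 * y * v / (8 * y^2) ≤ 4 * y * v / ((x - u)^2 + (y + v)^2) :=
      div_le_div_of_nonneg_left (by positivity) hDpos hDle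
    have h2 : 4 * y * v / (8 * y^2) = v / (2 * y) := by field_simp; ring
    linarith
  have hs0 : 9/10 ≤ sigmaC (Complex.mk x y) (Complex.mk u v) := by linarith
  have hG : v / (18 * y) ≤ Gfun (sigmaC (Complex.mk x y) (Complex.mk u v)) := by
    have hG1 := Gfun_ge hs0 hs1
    have h2 : v / (18 * y) ≤ (1 - sigmaC (Complex.mk x y) (Complex.mk u v)) / 9 := by
      rw [div_le_div_iff₀ (by positivity) (by norm_num)]
      rw [div_le_iff₀ (by positivity)] at hsm_ge
      linarith
    linarith
  -- ratio computation
  have hzne : Complex.mk x y ≠ 0 := by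
    intro h
    have h2 : y = 0 := congrArg Complex.im h
    linarith
  have hwne : Complex.mk u v ≠ 0 := by
    intro h
    have h2 : v = 0 := congrArg Complex.im h
    linarith
  have hNz : 0 < Complex.normSq (Complex.mk x y) := Complex.normSq_pos.2 hzne
  have hNw : 0 < Complex.normSq (Complex.mk u v) := Complex.normSq_pos.2 hwne
  have hNzim : (Complex.mk x y).im = y := rfl
  have hNwim : (Complex.mk u v).im = v := rfl
  have hratio : ((1 / Complex.mk x y).im / (1 / Complex.mk u v).im) =
      (y * Complex.normSq (Complex.mk u v)) / (Complex.normSq (Complex.mk x y) * v) := by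
    rw [one_div, one_div, Complex.inv_im, Complex.inv_im, hNzim, hNwim]
    field_simp
  have hNzle : Complex.normSq (Complex.mk x y) ≤ 2 * y ^ 2 := by
    rw [Complex.normSq_apply]
    simp only
    nlinarith [_root_.sq_abs x, abs_nonneg x]
  have hratio_ge : Complex.normSq (Complex.mk u v) / (2 * y * v) ≤
      ((1 / Complex.mk x y).im / (1 / Complex.mk u v).im) := by
    rw [hratio]
    have ha : 0 ≤ y * Complex.normSq (Complex.mk u v) := mul_nonneg hy.le hNw.le
    have hb : 0 < Complex.normSq (Complex.mk x y) * v := mul_pos hNz hw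
    have hc : Complex.normSq (Complex.mk x y) * v ≤ 2 * y^2 * v :=
      mul_le_mul_of_nonneg_right hNzle hw.le
    have h1 : (y * Complex.normSq (Complex.mk u v)) / (2 * y^2 * v) ≤
        (y * Complex.normSq (Complex.mk u v)) / (Complex.normSq (Complex.mk x y) * v) :=
      div_le_div_of_nonneg_left ha hb hc
    have h2 : (y * Complex.normSq (Complex.mk u v)) / (2 * y^2 * v) =
        Complex.normSq (Complex.mk u v) / (2 * y * v) := by
      rw [show 2 * y^2 * v = y * (2 * y * v) by ring]
      exact mul_div_mul_left _ _ hy.ne'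
    exact h2 ▸ h1
  have hfin : Complex.normSq (Complex.mk u v) / (2 * y * v) * (v / (18 * y)) =
      Complex.normSq (Complex.mk u v) / 36 / y ^ 2 := by
    rw [div_mul_div_comm, div_div]
    rw [show 2 * y * v * (18 * y) = v * (36 * y ^ 2) by ring]
    rw [mul_comm (Complex.normSq (Complex.mk u v)) v]
    rw [mul_div_mul_left _ _ hw.ne']
  have habs2 : Real.sqrt (Complex.normSq (Complex.mk u v)) ^ 2 =
      Complex.normSq (Complex.mk u v) :=
    Real.sq_sqrt (Complex.normSq_nonneg _)
  unfold pbulk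
  calc Real.sqrt (Complex.normSq (Complex.mk u v)) ^ 2 / 36 / y ^ 2
      = Complex.normSq (Complex.mk u v) / (2 * y * v) * (v / (18 * y)) := by
        rw [habs2, hfin]
    _ ≤ ((1 / Complex.mk x y).im / (1 / Complex.mk u v).im) *
        Gfun (sigmaC (Complex.mk x y) (Complex.mk u v)) :=
        mul_le_mul hratio_ge hG (by positivity)
          (le_trans (div_nonneg hNw.le (by positivity)) hratio_ge)

lemma lintegral_inv_Ioi_top {T : ℝ} (hT : 0 < T) :
    ∫⁻ y in Ioi T, ENNReal.ofReal (y⁻¹) = ⊤ := by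
  by_contra h
  have hmeas : AEStronglyMeasurable (fun y : ℝ => y⁻¹) (volume.restrict (Ioi T)) :=
    (measurable_inv).aestronglyMeasurable
  have hpos : 0 ≤ᵐ[volume.restrict (Ioi T)] (fun y : ℝ => y⁻¹) := by
    filter_upwards [ae_restrict_mem measurableSet_Ioi] with y hy
    have : 0 < y := lt_trans hT hy
    positivity
  have := (lintegral_ofReal_ne_top_iff_integrable hmeas hpos).1 h
  exact not_IntegrableOn_Ioi_inv this

/-- the expected area of the SLE₈/₃ bubble with bulk point `w` is
infinite: `∫_ℍ p_w(z) dA(z) = ∞`. -/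
theorem stmt16 (w : ℂ) (hw : 0 < w.im) :
    ∫⁻ z in {z : ℂ | 0 < z.im}, ENNReal.ofReal (pbulk w z) = ⊤ := by
  set T : ℝ := max (40 * w.im) (‖w‖) with hTdef
  have hT40 : 40 * w.im ≤ T := le_max_left _ _
  have hTabs : ‖w‖ ≤ T := le_max_right _ _
  have hTpos : 0 < T := lt_of_lt_of_le (by linarith) hT40
  set c : ℝ := ‖w‖ ^ 2 / 36 with hcdef
  have hwne : w ≠ 0 := by intro h; rw [h] at hw; simp at hw
  have hc : 0 < c := by
    have : 0 < ‖w‖ := norm_pos_iff.mpr hwne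
    positivity
  set S : Set ℂ := {z : ℂ | T < z.im ∧ |z.re| < z.im} with hSdef
  have hSmeas : MeasurableSet S := by
    apply MeasurableSet.inter
    · exact measurableSet_lt measurable_const Complex.measurable_im
    · exact measurableSet_lt Complex.measurable_re.abs Complex.measurable_im
  have hSsub : S ⊆ {z : ℂ | 0 < z.im} := by
    intro z hz
    exact lt_trans hTpos hz.1
  -- Step 1: lower bound by the explicit integral
  have step1 : ∫⁻ z in S, ENNReal.ofReal (c / z.im ^ 2) ≤
      ∫⁻ z in {z : ℂ | 0 < z.im}, ENNReal.ofReal (pbulk w z) := by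
    refine le_trans ?_ (lintegral_mono_set hSsub)
    apply setLIntegral_mono' hSmeas
    intro z hz
    apply ENNReal.ofReal_le_ofReal
    exact pbulk_ge w hw z (le_trans hT40 hz.1.le) (le_trans hTabs hz.1.le) hz.2.le
  -- Step 2: the explicit integral is infinite
  have step2 : ∫⁻ z in S, ENNReal.ofReal (c / z.im ^ 2) = ⊤ := by
    rw [← lintegral_indicator hSmeas]
    set S' : Set (ℝ × ℝ) := {p : ℝ × ℝ | T < p.2 ∧ |p.1| < p.2} with hS'def
    have hS'meas : MeasurableSet S' := by
      apply MeasurableSet.inter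
      · exact measurableSet_lt measurable_const measurable_snd
      · exact measurableSet_lt measurable_fst.abs measurable_snd
    set F : ℝ × ℝ → ENNReal := S'.indicator (fun p => ENNReal.ofReal (c / p.2 ^ 2)) with hFdef
    have hFmeas : Measurable F := by
      apply Measurable.indicator _ hS'meas
      exact (Measurable.const_div (measurable_snd.pow_const 2) c).ennreal_ofReal
    have htransfer : ∫⁻ p, F p ∂(volume : Measure (ℝ × ℝ)) =
        ∫⁻ z, S.indicator (fun z => ENNReal.ofReal (c / z.im ^ 2)) z := by
      rw [Complex.volume_preserving_equiv_real_prod.lintegral_map_equiv F]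
      rfl
    rw [← htransfer]
    rw [Measure.volume_eq_prod, lintegral_prod_symm F hFmeas.aemeasurable]
    have hinner : ∀ y : ℝ, ∫⁻ x, F (x, y) ∂volume =
        (Ioi T).indicator (fun y => ENNReal.ofReal (c / y ^ 2) * ENNReal.ofReal (2 * y)) y := by
      intro y
      by_cases hy : T < y
      · have heq : (fun x => F (x, y)) =
            (Ioo (-y) y).indicator (fun _ => ENNReal.ofReal (c / y ^ 2)) := by
          ext x
          simp only [hFdef, Set.indicator_apply, hS'def, Set.mem_setOf_eq, Set.mem_Ioo]
          by_cases hx : |x| < y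
          · rw [if_pos ⟨hy, hx⟩, if_pos (abs_lt.1 hx)]
          · rw [if_neg (fun h => hx h.2), if_neg (fun h => hx (abs_lt.2 h))]
        rw [heq, lintegral_indicator_const measurableSet_Ioo, Real.volume_Ioo,
          Set.indicator_of_mem (show y ∈ Ioi T from hy)]
        congr 1
        ring
      · have heq : (fun x => F (x, y)) = fun _ => 0 := by
          ext x
          simp only [hFdef, Set.indicator_apply, hS'def, Set.mem_setOf_eq]
          rw [if_neg (fun h => hy h.1)]
        rw [heq, lintegral_zero, Set.indicator_of_notMem (show y ∉ Ioi T from hy)]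
    simp_rw [hinner]
    rw [lintegral_indicator measurableSet_Ioi]
    have hptwise : ∀ y ∈ Ioi T,
        ENNReal.ofReal (c / y ^ 2) * ENNReal.ofReal (2 * y) =
        ENNReal.ofReal (2 * c) * ENNReal.ofReal (y⁻¹) := by
      intro y hy
      have hy0 : 0 < y := lt_trans hTpos hy
      rw [← ENNReal.ofReal_mul (by positivity), ← ENNReal.ofReal_mul (by positivity)]
      congr 1
      field_simp
    rw [setLIntegral_congr_fun measurableSet_Ioi hptwise]
    rw [lintegral_const_mul _ measurable_inv.ennreal_ofReal]
    rw [lintegral_inv_Ioi_top hTpos]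
    rw [ENNReal.mul_top]
    simp only [ne_eq, ENNReal.ofReal_eq_zero, not_le]
    linarith
  rw [eq_top_iff, ← step2]
  exact step1
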